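/- Let G = C_{p^r} × C_{p^s} with p^s ≥ 3, k a field of characteristic p, x, y generators of the cyclic factors, and X = x − 1, Y = y − 1 in kG. Set l = p^r + p^s − 4, and for a kG-module M let soc^l(M) = {m ∈ M : J(kG)^l · m = 0}. If z₀, z₂, z₄ ∈ M satisfy Y·z₀ − X·z₂ ∈ soc^l(M) and Y·z₂ − X·z₄ ∈ soc^l(M), then X·z₀ ∈ soc^l(M) and X·z₂ ∈ soc^l(M). -/

import Mathlib

open MonoidAlgebra

section Aux
variable {R : Type*} [CommRing R] {M : Type*} [AddCommGroup M] [Module R M]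

lemma span_pair_pow_smul (X Y : R) (n : ℕ) :
    ∀ (m : M), (∀ a b : ℕ, a + b = n → (X ^ a * Y ^ b) • m = 0) →
    ∀ f ∈ (Ideal.span {X, Y}) ^ n, f • m = 0 := by
  induction n with
  | zero =>
    intro m h f _
    have h0 := h 0 0 rfl
    simp only [pow_zero, one_mul, one_smul] at h0
    simp [h0]
  | succ n ih =>
    intro m h f hf
    rw [pow_succ] at hf
    refine Submodule.mul_induction_on hf (fun g hg r hr => ?_) (fun x y hx hy => by
      rw [add_smul, hx, hy, add_zero])
    rw [Ideal.mem_span_pair] at hr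
    obtain ⟨u, v, rfl⟩ := hr
    have hXm : ∀ a b : ℕ, a + b = n → (X ^ a * Y ^ b) • (X • m) = 0 := by
      intro a b hab
      rw [smul_smul]
      have e : X ^ a * Y ^ b * X = X ^ (a + 1) * Y ^ b := by ring
      rw [e]
      exact h _ _ (by omega)
    have hYm : ∀ a b : ℕ, a + b = n → (X ^ a * Y ^ b) • (Y • m) = 0 := by
      intro a b hab
      rw [smul_smul]
      have e : X ^ a * Y ^ b * Y = X ^ a * Y ^ (b + 1) := by ring
      rw [e]
      exact h _ _ (by omega)
    have e1 : g • (X • m) = 0 := ih (X • m) hXm g hg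
    have e2 : g • (Y • m) = 0 := ih (Y • m) hYm g hg
    have e : (g * (u * X + v * Y)) • m = u • (g • (X • m)) + v • (g • (Y • m)) := by
      rw [smul_smul, smul_smul, smul_smul, smul_smul, ← add_smul]
      ring_nf
    rw [e, e1, e2, smul_zero, smul_zero, add_zero]

lemma no_W_aux (X Y : R) (pr ps : ℕ) (hpr : 2 ≤ pr) (hps : 3 ≤ ps)
    (hX : X ^ pr = 0) (hY : Y ^ ps = 0)
    (J : Ideal R) (hXJ : X ∈ J) (hYJ : Y ∈ J) (hJ : J ≤ Ideal.span {X, Y})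
    (z₀ z₂ z₄ : M)
    (h1 : ∀ a ∈ J ^ (pr + ps - 4), a • (Y • z₀ - X • z₂) = (0 : M))
    (h2 : ∀ a ∈ J ^ (pr + ps - 4), a • (Y • z₂ - X • z₄) = (0 : M)) :
    (∀ a ∈ J ^ (pr + ps - 4), a • (X • z₀) = (0 : M)) ∧
    (∀ a ∈ J ^ (pr + ps - 4), a • (X • z₂) = (0 : M)) := by
  set l := pr + ps - 4 with hl
  have hmono : ∀ a b : ℕ, l ≤ a + b → X ^ a * Y ^ b ∈ J ^ l := by
    intro a b hab
    have h1 : X ^ a * Y ^ b ∈ J ^ (a + b) := by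
      rw [pow_add]
      exact Ideal.mul_mem_mul (Ideal.pow_mem_pow hXJ a) (Ideal.pow_mem_pow hYJ b)
    exact Ideal.pow_le_pow_right hab h1
  -- from c ∈ J^l and h : ∀ a ∈ J^l, a • (u - v) = 0, get c • u = c • v
  have key : ∀ c ∈ J ^ l, ∀ (u v : M), (∀ a ∈ J ^ l, a • (u - v) = 0) → c • u = c • v := by
    intro c hc u v h
    have := h c hc
    rw [smul_sub, sub_eq_zero] at this
    exact this
  have hXe : ∀ n : ℕ, 1 ≤ n → X ^ (n - 1) * X = X ^ n := by
    intro n hn; rw [← pow_succ, Nat.sub_add_cancel hn]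
  have hYe : ∀ n : ℕ, 1 ≤ n → Y ^ (n - 1) * Y = Y ^ n := by
    intro n hn; rw [← pow_succ, Nat.sub_add_cancel hn]
  -- K1 : X^(pr-1) Y^(ps-2) • z₀ = 0
  have hc : X ^ (pr - 1) * Y ^ (ps - 3) ∈ J ^ l := hmono _ _ (by omega)
  have cY : (X ^ (pr - 1) * Y ^ (ps - 3)) * Y = X ^ (pr - 1) * Y ^ (ps - 2) := by
    rw [mul_assoc]
    congr 1
    have : ps - 2 = (ps - 2 - 1) + 1 := by omega
    rw [this, pow_succ]
    congr 2
  have cX : (X ^ (pr - 1) * Y ^ (ps - 3)) * X = 0 := by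
    rw [mul_comm, ← mul_assoc, mul_comm X, hXe pr (by omega), hX, zero_mul]
  have K1 : (X ^ (pr - 1) * Y ^ (ps - 2)) • z₀ = 0 := by
    have e := key _ hc _ _ h1
    rw [smul_smul, smul_smul, cY, cX, zero_smul] at e
    exact e
  have K2 : (X ^ (pr - 1) * Y ^ (ps - 2)) • z₂ = 0 := by
    have e := key _ hc _ _ h2
    rw [smul_smul, smul_smul, cY, cX, zero_smul] at e
    exact e
  -- K3 : X^(pr-2) Y^(ps-1) • z₀ = 0 (when pr ≥ 3) via d = X^(pr-2) Y^(ps-2)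
  have hd : X ^ (pr - 2) * Y ^ (ps - 2) ∈ J ^ l := hmono _ _ (by omega)
  have dY : (X ^ (pr - 2) * Y ^ (ps - 2)) * Y = X ^ (pr - 2) * Y ^ (ps - 1) := by
    rw [mul_assoc]
    congr 1
    have : ps - 1 = (ps - 1 - 1) + 1 := by omega
    rw [this, pow_succ]
    congr 2
  have dX : (X ^ (pr - 2) * Y ^ (ps - 2)) * X = X ^ (pr - 1) * Y ^ (ps - 2) := by
    rw [mul_comm, ← mul_assoc, mul_comm X]
    congr 1
    have : pr - 1 = (pr - 1 - 1) + 1 := by omega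
    rw [this, pow_succ]
    congr 2
  have K3 : (X ^ (pr - 2) * Y ^ (ps - 1)) • z₀ = 0 := by
    have e := key _ hd _ _ h1
    rw [smul_smul, smul_smul, dY, dX] at e
    rw [e, K2]
  -- K4 : X^(pr-2) Y^(ps-1) • z₂ = 0, when 3 ≤ pr, via e = X^(pr-3) Y^(ps-1)
  have K4 : 3 ≤ pr → (X ^ (pr - 2) * Y ^ (ps - 1)) • z₂ = 0 := by
    intro h3
    have he : X ^ (pr - 3) * Y ^ (ps - 1) ∈ J ^ l := hmono _ _ (by omega)
    have eX : (X ^ (pr - 3) * Y ^ (ps - 1)) * X = X ^ (pr - 2) * Y ^ (ps - 1) := by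
      rw [mul_comm, ← mul_assoc, mul_comm X]
      congr 1
      have : pr - 2 = (pr - 3) + 1 := by omega
      rw [this, pow_succ]
    congr 2
    have eY : (X ^ (pr - 3) * Y ^ (ps - 1)) * Y = 0 := by
      rw [mul_assoc, hYe ps (by omega), hY, mul_zero]
    have e := key _ he _ _ h1
    rw [smul_smul, smul_smul, eX, eY, zero_smul] at e
    exact e.symm
  -- monomial computations of degree l+1 with positive X-exponent
  have Z0 : ∀ a b : ℕ, a + b = l + 1 → 1 ≤ a → (X ^ a * Y ^ b) • z₀ = 0 := by
    intro a b hab ha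
    rcases le_or_gt pr a with h | h
    · rw [pow_eq_zero_of_le h hX, zero_mul, zero_smul]
    rcases le_or_gt ps b with h' | h'
    · rw [pow_eq_zero_of_le h' hY, mul_zero, zero_smul]
    -- now a ≤ pr - 1, b ≤ ps - 1, a + b = pr + ps - 3
    have : (a = pr - 1 ∧ b = ps - 2) ∨ (a = pr - 2 ∧ b = ps - 1) := by omega
    rcases this with ⟨rfl, rfl⟩ | ⟨rfl, rfl⟩
    · exact K1
    · exact K3
  have Z2 : ∀ a b : ℕ, a + b = l + 1 → 1 ≤ a → (X ^ a * Y ^ b) • z₂ = 0 := by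
    intro a b hab ha
    rcases le_or_gt pr a with h | h
    · rw [pow_eq_zero_of_le h hX, zero_mul, zero_smul]
    rcases le_or_gt ps b with h' | h'
    · rw [pow_eq_zero_of_le h' hY, mul_zero, zero_smul]
    have : (a = pr - 1 ∧ b = ps - 2) ∨ (a = pr - 2 ∧ b = ps - 1 ∧ 3 ≤ pr) := by omega
    rcases this with ⟨rfl, rfl⟩ | ⟨rfl, rfl, h3⟩
    · exact K2
    · exact K4 h3
  constructor
  · intro a ha
    refine span_pair_pow_smul X Y l (X • z₀) ?_ a (Ideal.pow_right_mono hJ l ha)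
    intro a b hab
    rw [smul_smul]
    have e : X ^ a * Y ^ b * X = X ^ (a + 1) * Y ^ b := by ring
    rw [e]
    exact Z0 _ _ (by omega) (by omega)
  · intro a ha
    refine span_pair_pow_smul X Y l (X • z₂) ?_ a (Ideal.pow_right_mono hJ l ha)
    intro a b hab
    rw [smul_smul]
    have e : X ^ a * Y ^ b * X = X ^ (a + 1) * Y ^ b := by ring
    rw [e]
    exact Z2 _ _ (by omega) (by omega)


lemma pow_mul_sub_one_mem {R : Type*} [CommRing R] (I : Ideal R) {u v : R}
    (hu : u - 1 ∈ I) (hv : v - 1 ∈ I) (m n : ℕ) : u ^ m * v ^ n - 1 ∈ I := by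
  have h : ∀ (w : R), w - 1 ∈ I → ∀ t : ℕ, w ^ t - 1 ∈ I := fun w hw t => by
    rw [← geom_sum_mul]
    exact Ideal.mul_mem_left _ _ hw
  have e : u ^ m * v ^ n - 1 = u ^ m * (v ^ n - 1) + (u ^ m - 1) := by ring
  rw [e]
  exact Ideal.add_mem _ (Ideal.mul_mem_left _ _ (h v hv n)) (h u hu m)

lemma ofAdd_decomp (pr ps : ℕ) [NeZero pr] [NeZero ps] (a : ZMod pr) (b : ZMod ps) :
    (Multiplicative.ofAdd ((1 : ZMod pr), (0 : ZMod ps))) ^ a.val *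
      (Multiplicative.ofAdd ((0 : ZMod pr), (1 : ZMod ps))) ^ b.val =
      Multiplicative.ofAdd (a, b) := by
  rw [← ofAdd_nsmul, ← ofAdd_nsmul, ← ofAdd_add]
  congr 1
  simp [Prod.ext_iff, nsmul_eq_mul, ZMod.natCast_val, ZMod.cast_id]

end Aux

theorem no_W_shape (p r s : ℕ) [Fact p.Prime] (hr : 1 ≤ r) (hs : 3 ≤ p ^ s)
    (k : Type*) [Field k] [CharP k p]
    (M : Type*) [AddCommGroup M]
    [Module (MonoidAlgebra k (Multiplicative (ZMod (p ^ r) × ZMod (p ^ s)))) M]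
    (z₀ z₂ z₄ : M) :
    letI G := Multiplicative (ZMod (p ^ r) × ZMod (p ^ s))
    letI x : G := Multiplicative.ofAdd ((1 : ZMod (p ^ r)), (0 : ZMod (p ^ s)))
    letI y : G := Multiplicative.ofAdd ((0 : ZMod (p ^ r)), (1 : ZMod (p ^ s)))
    letI X : MonoidAlgebra k G := single x 1 - 1
    letI Y : MonoidAlgebra k G := single y 1 - 1
    letI J := Ideal.jacobson (⊥ : Ideal (MonoidAlgebra k G))
    letI l := p ^ r + p ^ s - 4
    (∀ a ∈ J ^ l, a • (Y • z₀ - X • z₂) = (0 : M)) →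
    (∀ a ∈ J ^ l, a • (Y • z₂ - X • z₄) = (0 : M)) →
    (∀ a ∈ J ^ l, a • (X • z₀) = (0 : M)) ∧ (∀ a ∈ J ^ l, a • (X • z₂) = (0 : M)) := by
  intro h1 h2
  have hp2 : 2 ≤ p := (Fact.out : p.Prime).two_le
  haveI : NeZero (p ^ r) := ⟨by positivity⟩
  haveI : NeZero (p ^ s) := ⟨by positivity⟩
  set G := Multiplicative (ZMod (p ^ r) × ZMod (p ^ s)) with hG
  set x : G := Multiplicative.ofAdd ((1 : ZMod (p ^ r)), (0 : ZMod (p ^ s))) with hx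
  set y : G := Multiplicative.ofAdd ((0 : ZMod (p ^ r)), (1 : ZMod (p ^ s))) with hy
  set X : MonoidAlgebra k G := single x 1 - 1 with hX
  set Y : MonoidAlgebra k G := single y 1 - 1 with hY
  haveI : CharP (MonoidAlgebra k G) p :=
    charP_of_injective_algebraMap
      (show Function.Injective (algebraMap k (MonoidAlgebra k G)) from
        fun a b hab => MonoidAlgebra.single_right_injective (m := (1 : G)) hab) p
  -- nilpotency
  have hxp : x ^ p ^ r = 1 := by
    rw [hx, ← ofAdd_nsmul]
    have e : (p ^ r) • ((1 : ZMod (p ^ r)), (0 : ZMod (p ^ s))) = 0 := by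
      simp [Prod.ext_iff, nsmul_eq_mul, ZMod.natCast_self]
    rw [e, ofAdd_zero]
  have hyp : y ^ p ^ s = 1 := by
    rw [hy, ← ofAdd_nsmul]
    have e : (p ^ s) • ((0 : ZMod (p ^ r)), (1 : ZMod (p ^ s))) = 0 := by
      simp [Prod.ext_iff, nsmul_eq_mul, ZMod.natCast_self]
    rw [e, ofAdd_zero]
  have hXnil : X ^ p ^ r = 0 := by
    rw [hX, sub_pow_char_pow, MonoidAlgebra.single_pow, hxp, one_pow, one_pow,
      ← MonoidAlgebra.one_def, sub_self]
  have hYnil : Y ^ p ^ s = 0 := by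
    rw [hY, sub_pow_char_pow, MonoidAlgebra.single_pow, hyp, one_pow, one_pow,
      ← MonoidAlgebra.one_def, sub_self]
  -- nilpotents are in the Jacobson radical
  have hmemJ : ∀ (w : MonoidAlgebra k G) (n : ℕ), w ^ n = 0 →
      w ∈ Ideal.jacobson (⊥ : Ideal (MonoidAlgebra k G)) := by
    intro w n hw
    rw [Ideal.jacobson]
    refine Submodule.mem_sInf.mpr ?_
    rintro I ⟨-, hI⟩
    exact hI.isPrime.mem_of_pow_mem n (by rw [hw]; exact I.zero_mem)
  -- the augmentation map
  set ε : MonoidAlgebra k G →ₐ[k] k := MonoidAlgebra.lift k k G 1 with hε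
  have hεs : ∀ (g : G) (c : k), ε (single g c) = c := by
    intro g c
    rw [hε, MonoidAlgebra.lift_single]
    simp
  have hker : (RingHom.ker ε).IsMaximal :=
    RingHom.ker_isMaximal_of_surjective ε (fun c => ⟨single 1 c, hεs 1 c⟩)
  have hJle : Ideal.jacobson (⊥ : Ideal (MonoidAlgebra k G)) ≤ RingHom.ker ε := by
    rw [Ideal.jacobson]
    exact sInf_le ⟨bot_le, hker⟩
  -- elements single g 1 - 1 are in span {X, Y}
  have hg1 : ∀ g : G, single g (1 : k) - 1 ∈ Ideal.span {X, Y} := by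
    intro g
    have e : single g (1 : k) =
        (single x (1 : k)) ^ (g.toAdd.1).val * (single y (1 : k)) ^ (g.toAdd.2).val := by
      rw [MonoidAlgebra.single_pow, MonoidAlgebra.single_pow, MonoidAlgebra.single_mul_single,
        one_pow, one_pow, one_mul]
      congr 1
      rw [hx, hy, ofAdd_decomp]
      exact (ofAdd_toAdd g).symm
    rw [e]
    exact pow_mul_sub_one_mem _ (hX ▸ Ideal.subset_span (Set.mem_insert _ _))
      (hY ▸ Ideal.subset_span (Set.mem_insert_of_mem _ rfl)) _ _
  have hspan : RingHom.ker ε ≤ Ideal.span {X, Y} := by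
    intro f hf
    have main : ∀ f : MonoidAlgebra k G,
        f - algebraMap k (MonoidAlgebra k G) (ε f) ∈ Ideal.span {X, Y} := by
      intro f
      induction f using MonoidAlgebra.induction with
      | zero => simp
      | single_add g c f hg hc ih =>
        have esplit : ∀ A B C D : MonoidAlgebra k G,
            A + B - (C + D) = (A - C) + (B - D) := fun A B C D => by ring
        rw [map_add, map_add, esplit]
        refine Ideal.add_mem _ ?_ ih
        show single g c - algebraMap k (MonoidAlgebra k G) (ε (single g c)) ∈ _
        rw [hεs]
        have e2 : single g c - algebraMap k (MonoidAlgebra k G) c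
            = algebraMap k (MonoidAlgebra k G) c * (single g 1 - 1) := by
          rw [mul_sub, mul_one]
          congr 1
          rw [MonoidAlgebra.coe_algebraMap]
          simp [MonoidAlgebra.single_mul_single]
        rw [e2]
        exact Ideal.mul_mem_left _ _ (hg1 g)
    have := main f
    rwa [RingHom.mem_ker.mp hf, map_zero, sub_zero] at this
  exact no_W_aux X Y (p ^ r) (p ^ s)
    (le_trans hp2 (Nat.le_self_pow (by omega) p)) hs hXnil hYnil
    (Ideal.jacobson ⊥) (hmemJ X _ hXnil) (hmemJ Y _ hYnil)
    (le_trans hJle hspan) z₀ z₂ z₄ h1 h2
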